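/- The map f(·,−δ) is the inverse of f(·,δ): for x with both compositions defined, f(f(x,δ),−δ) = x, where f is the explicit birational solution map of the Hirota–Kimura discrete Euler top. -/

import Mathlib

noncomputable def hkDen (d1 d2 d3 x1 x2 x3 : ℝ) : ℝ :=
  1 - d2*d3*x1^2 - d1*d3*x2^2 - d1*d2*x3^2 - 2*d1*d2*d3*x1*x2*x3

noncomputable def hk1 (d1 d2 d3 x1 x2 x3 : ℝ) : ℝ :=
  (x1 + 2*d1*x2*x3 + x1*(-(d2*d3*x1^2) + d1*d3*x2^2 + d1*d2*x3^2)) / hkDen d1 d2 d3 x1 x2 x3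

noncomputable def hk2 (d1 d2 d3 x1 x2 x3 : ℝ) : ℝ :=
  (x2 + 2*d2*x1*x3 + x2*(d2*d3*x1^2 - d1*d3*x2^2 + d1*d2*x3^2)) / hkDen d1 d2 d3 x1 x2 x3

noncomputable def hk3 (d1 d2 d3 x1 x2 x3 : ℝ) : ℝ :=
  (x3 + 2*d3*x1*x2 + x3*(d2*d3*x1^2 + d1*d3*x2^2 - d1*d2*x3^2)) / hkDen d1 d2 d3 x1 x2 x3

/-- The image of `hk` satisfies the symmetric implicit (Hirota–Kimura) system. -/
lemma hk_system (d1 d2 d3 x1 x2 x3 : ℝ) (hΔ : hkDen d1 d2 d3 x1 x2 x3 ≠ 0) :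
    hk1 d1 d2 d3 x1 x2 x3 - x1
      = d1 * (hk2 d1 d2 d3 x1 x2 x3 * x3 + x2 * hk3 d1 d2 d3 x1 x2 x3) ∧
    hk2 d1 d2 d3 x1 x2 x3 - x2
      = d2 * (hk3 d1 d2 d3 x1 x2 x3 * x1 + x3 * hk1 d1 d2 d3 x1 x2 x3) ∧
    hk3 d1 d2 d3 x1 x2 x3 - x3
      = d3 * (hk1 d1 d2 d3 x1 x2 x3 * x2 + x1 * hk2 d1 d2 d3 x1 x2 x3) := by
  have hD : (1 - d2*d3*x1^2 - d1*d3*x2^2 - d1*d2*x3^2 - 2*d1*d2*d3*x1*x2*x3) ≠ 0 := by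
    simpa [hkDen] using hΔ
  refine ⟨?_, ?_, ?_⟩ <;>
  · simp only [hk1, hk2, hk3, hkDen]
    generalize hDD : (1 - d2*d3*x1^2 - d1*d3*x2^2 - d1*d2*x3^2 - 2*d1*d2*d3*x1*x2*x3) = D at hD ⊢
    field_simp
    subst hDD
    ring

theorem stmt_3 (d1 d2 d3 x1 x2 x3 : ℝ)
    (hΔ : hkDen d1 d2 d3 x1 x2 x3 ≠ 0)
    (hΔ' : hkDen (-d1) (-d2) (-d3)
        (hk1 d1 d2 d3 x1 x2 x3) (hk2 d1 d2 d3 x1 x2 x3) (hk3 d1 d2 d3 x1 x2 x3) ≠ 0) :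
    hk1 (-d1) (-d2) (-d3)
        (hk1 d1 d2 d3 x1 x2 x3) (hk2 d1 d2 d3 x1 x2 x3) (hk3 d1 d2 d3 x1 x2 x3) = x1 ∧
    hk2 (-d1) (-d2) (-d3)
        (hk1 d1 d2 d3 x1 x2 x3) (hk2 d1 d2 d3 x1 x2 x3) (hk3 d1 d2 d3 x1 x2 x3) = x2 ∧
    hk3 (-d1) (-d2) (-d3)
        (hk1 d1 d2 d3 x1 x2 x3) (hk2 d1 d2 d3 x1 x2 x3) (hk3 d1 d2 d3 x1 x2 x3) = x3 := by
  set a := hk1 d1 d2 d3 x1 x2 x3 with ha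
  set b := hk2 d1 d2 d3 x1 x2 x3 with hb
  set c := hk3 d1 d2 d3 x1 x2 x3 with hc
  set A := hk1 (-d1) (-d2) (-d3) a b c with hA
  set B := hk2 (-d1) (-d2) (-d3) a b c with hB
  set C := hk3 (-d1) (-d2) (-d3) a b c with hC
  obtain ⟨h1, h2, h3⟩ := hk_system d1 d2 d3 x1 x2 x3 hΔ
  obtain ⟨g1, g2, g3⟩ := hk_system (-d1) (-d2) (-d3) a b c hΔ'
  -- linear system for the differences u = A - x1, v = B - x2, w = C - x3
  have e1 : (A - x1) + d1*c*(B - x2) + d1*b*(C - x3) = 0 := by linear_combination g1 + h1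
  have e2 : d2*c*(A - x1) + (B - x2) + d2*a*(C - x3) = 0 := by linear_combination g2 + h2
  have e3 : d3*b*(A - x1) + d3*a*(B - x2) + (C - x3) = 0 := by linear_combination g3 + h3
  have hE : (1 - d2*d3*a^2 - d1*d3*b^2 - d1*d2*c^2 + 2*d1*d2*d3*a*b*c) ≠ 0 := by
    have := hΔ'
    simp only [hkDen] at this
    convert this using 1
    ring
  have hu : (1 - d2*d3*a^2 - d1*d3*b^2 - d1*d2*c^2 + 2*d1*d2*d3*a*b*c) * (A - x1) = 0 := by
    linear_combination (1 - d2*d3*a^2)*e1 + (d1*d3*a*b - d1*c)*e2 + (d1*d2*a*c - d1*b)*e3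
  have hv : (1 - d2*d3*a^2 - d1*d3*b^2 - d1*d2*c^2 + 2*d1*d2*d3*a*b*c) * (B - x2) = 0 := by
    linear_combination (d2*d3*a*b - d2*c)*e1 + (1 - d1*d3*b^2)*e2 + (d1*d2*b*c - d2*a)*e3
  have hw : (1 - d2*d3*a^2 - d1*d3*b^2 - d1*d2*c^2 + 2*d1*d2*d3*a*b*c) * (C - x3) = 0 := by
    linear_combination (d2*d3*a*c - d3*b)*e1 + (d1*d3*b*c - d3*a)*e2 + (1 - d1*d2*c^2)*e3
  have hu' := (mul_eq_zero.mp hu).resolve_left hE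
  have hv' := (mul_eq_zero.mp hv).resolve_left hE
  have hw' := (mul_eq_zero.mp hw).resolve_left hE
  exact ⟨by linarith, by linarith, by linarith⟩
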